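/- The Flammia POVM is rank-1 strictly-complete: Let d ≥ 2, a, b > 0, let ψ ∈ ℂ^d with ψ_0 ≠ 0, and set ρ = ψψ†. If σ is any PSD d×d matrix with Tr(σ) = Tr(ρ) and Tr(E σ) = Tr(E ρ) for every E among E_0 = a·e_0e_0†, E_k = b(𝟙 + e_0e_k† + e_ke_0†), and Ẽ_k = b(𝟙 − i·e_0e_k† + i·e_ke_0†) for k = 1, …, d−1, then σ = ρ. -/

import Mathlib

open Matrix
open scoped ComplexOrder

lemma trace_std_mul {d : ℕ} (i j : Fin d) (M : Matrix (Fin d) (Fin d) ℂ) :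
    (Matrix.single i j 1 * M).trace = M j i := by
  rw [Matrix.trace, Finset.sum_eq_single i]
  · simp [Matrix.diag, Matrix.single_mul_apply_same]
  · intro p _ hp
    exact Matrix.single_mul_apply_of_ne 1 i j p p hp M
  · simp

/-- The rank-one (outer-product) matrix `ψψ†`, with entries `ψ_j · conj(ψ_k)`. -/
noncomputable def outerProd {n : Type*} (ψ : n → ℂ) : Matrix n n ℂ :=
  Matrix.of fun j k => ψ j * star (ψ k)

/-- **The Flammia POVM is rank-1 strictly-complete.** If a PSD matrix `σ` has the same trace as
`ρ = ψψ†` (with `ψ₀ ≠ 0`) and the same traces against `E₀ = a·e₀e₀†`,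
`E_k = b(𝟙 + e₀e_k† + e_ke₀†)` and `Ẽ_k = b(𝟙 − i e₀e_k† + i e_ke₀†)` (k = 1,…,d−1),
then `σ = ρ`. -/
theorem flammia_rank1_strictly_complete (d : ℕ) (hd : 2 ≤ d) (a b : ℝ)
    (ha : 0 < a) (hb : 0 < b)
    (ψ : Fin d → ℂ) (hψ0 : ψ ⟨0, by omega⟩ ≠ 0)
    (σ : Matrix (Fin d) (Fin d) ℂ) (hσ : σ.PosSemidef)
    (htr : σ.trace = (outerProd ψ).trace)
    (h0 : (((a : ℂ) • Matrix.single (⟨0, by omega⟩ : Fin d) (⟨0, by omega⟩ : Fin d) 1)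
            * σ).trace
        = (((a : ℂ) • Matrix.single (⟨0, by omega⟩ : Fin d) (⟨0, by omega⟩ : Fin d) 1)
            * outerProd ψ).trace)
    (hE : ∀ k : Fin d, k ≠ ⟨0, by omega⟩ →
      (((b : ℂ) • ((1 : Matrix (Fin d) (Fin d) ℂ)
          + Matrix.single (⟨0, by omega⟩ : Fin d) k 1
          + Matrix.single k (⟨0, by omega⟩ : Fin d) 1)) * σ).trace
        = (((b : ℂ) • ((1 : Matrix (Fin d) (Fin d) ℂ)
          + Matrix.single (⟨0, by omega⟩ : Fin d) k 1
          + Matrix.single k (⟨0, by omega⟩ : Fin d) 1)) * outerProd ψ).trace)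
    (hEt : ∀ k : Fin d, k ≠ ⟨0, by omega⟩ →
      (((b : ℂ) • ((1 : Matrix (Fin d) (Fin d) ℂ)
          - Complex.I • Matrix.single (⟨0, by omega⟩ : Fin d) k 1
          + Complex.I • Matrix.single k (⟨0, by omega⟩ : Fin d) 1)) * σ).trace
        = (((b : ℂ) • ((1 : Matrix (Fin d) (Fin d) ℂ)
          - Complex.I • Matrix.single (⟨0, by omega⟩ : Fin d) k 1
          + Complex.I • Matrix.single k (⟨0, by omega⟩ : Fin d) 1)) * outerProd ψ).trace) :
    σ = outerProd ψ := by
  set z : Fin d := ⟨0, by omega⟩ with hz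
  have haC : (a : ℂ) ≠ 0 := by exact_mod_cast ha.ne'
  have hbC : (b : ℂ) ≠ 0 := by exact_mod_cast hb.ne'
  -- σ z z
  have hzz : σ z z = ψ z * star (ψ z) := by
    simp only [smul_mul_assoc, Matrix.trace_smul, trace_std_mul, smul_eq_mul] at h0
    have := mul_left_cancel₀ haC h0
    simpa [outerProd] using this
  -- first row/column
  have hrowcol : ∀ k : Fin d, σ z k = ψ z * star (ψ k) ∧ σ k z = ψ k * star (ψ z) := by
    intro k
    by_cases hk : k = z
    · subst hk
      exact ⟨hzz, hzz⟩
    · have h1 := hE k hk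
      have h2 := hEt k hk
      simp only [smul_mul_assoc, add_mul, sub_mul, one_mul, Matrix.trace_add,
        Matrix.trace_sub, Matrix.trace_smul, trace_std_mul, smul_eq_mul] at h1 h2
      have h1' := mul_left_cancel₀ hbC h1
      have h2' := mul_left_cancel₀ hbC h2
      rw [htr] at h1' h2'
      have p : σ k z + σ z k = outerProd ψ k z + outerProd ψ z k := by
        linear_combination h1'
      have q : -(Complex.I * σ k z) + Complex.I * σ z k
          = -(Complex.I * outerProd ψ k z) + Complex.I * outerProd ψ z k := by
        linear_combination h2'
      constructor
      · have : σ z k = outerProd ψ z k := by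
          linear_combination (1/2 : ℂ) * p - (Complex.I/2) * q
            - (1/2) * (σ k z - σ z k - outerProd ψ k z + outerProd ψ z k) * Complex.I_sq
        simpa [outerProd] using this
      · have : σ k z = outerProd ψ k z := by
          linear_combination (1/2 : ℂ) * p + (Complex.I/2) * q
            + (1/2) * (σ k z - σ z k - outerProd ψ k z + outerProd ψ z k) * Complex.I_sq
        simpa [outerProd] using this
  obtain ⟨B, hB⟩ : ∃ B : Matrix (Fin d) (Fin d) ℂ, σ = Bᴴ * B := by
    open scoped MatrixOrder in
    obtain ⟨B, hB⟩ := CStarAlgebra.nonneg_iff_eq_star_mul_self.mp hσ.nonneg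
    exact ⟨B, hB⟩
  have hentry : ∀ j k : Fin d, σ j k = ∑ r, star (B r j) * B r k := by
    intro j k
    rw [hB]
    simp [Matrix.mul_apply, Matrix.conjTranspose_apply]
  set w : Fin d → Fin d → ℂ := fun k r => star (ψ z) * B r k - star (ψ k) * B r z with hw
  have hSk : ∀ k, ∑ r, star (w k r) * w k r
      = (ψ z * star (ψ z)) * (σ k k - ψ k * star (ψ k)) := by
    intro k
    have e : ∀ r, star (w k r) * w k r =
        (ψ z * star (ψ z)) * (star (B r k) * B r k)
        - (ψ z * star (ψ k)) * (star (B r k) * B r z)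
        - (ψ k * star (ψ z)) * (star (B r z) * B r k)
        + (ψ k * star (ψ k)) * (star (B r z) * B r z) := by
      intro r
      simp only [hw, star_sub, star_mul', star_star]
      ring
    simp_rw [e]
    rw [Finset.sum_add_distrib, Finset.sum_sub_distrib, Finset.sum_sub_distrib,
      ← Finset.mul_sum, ← Finset.mul_sum, ← Finset.mul_sum, ← Finset.mul_sum,
      ← hentry k k, ← hentry k z, ← hentry z k, ← hentry z z,
      (hrowcol k).1, (hrowcol k).2, hzz]
    ring
  have hsum0 : ∑ k, ∑ r, star (w k r) * w k r = 0 := by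
    simp_rw [hSk]
    rw [← Finset.mul_sum]
    have htr' : ∑ k, (σ k k - ψ k * star (ψ k)) = 0 := by
      rw [Finset.sum_sub_distrib, sub_eq_zero]
      simpa [Matrix.trace, Matrix.diag, outerProd] using htr
    rw [htr', mul_zero]
  have hw0 : ∀ k r, w k r = 0 := by
    have hr : ∑ k, ∑ r, Complex.normSq (w k r) = 0 := by
      have h := hsum0
      simp_rw [Complex.star_def, ← Complex.normSq_eq_conj_mul_self] at h
      exact_mod_cast h
    intro k r
    have h1 := (Finset.sum_eq_zero_iff_of_nonneg (fun k _ =>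
      Finset.sum_nonneg (fun r _ => Complex.normSq_nonneg (w k r)))).mp hr k (Finset.mem_univ k)
    have h2 := (Finset.sum_eq_zero_iff_of_nonneg (fun r _ =>
      Complex.normSq_nonneg (w k r))).mp h1 r (Finset.mem_univ r)
    exact Complex.normSq_eq_zero.mp h2
  have keyR : ∀ j r, star (ψ z) * B r j = star (ψ j) * B r z := by
    intro j r
    have := hw0 j r
    simp only [hw] at this
    exact sub_eq_zero.mp this
  have keyL : ∀ j r, ψ z * star (B r j) = ψ j * star (B r z) := by
    intro j r
    have h := congrArg star (keyR j r)
    simpa [star_mul', star_star, mul_comm] using h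
  ext j k
  have hc : ψ z * star (ψ z) ≠ 0 := mul_ne_zero hψ0 (star_ne_zero.mpr hψ0)
  apply mul_left_cancel₀ hc
  have step1 : (ψ z * star (ψ z)) * σ j k
      = ∑ r, (ψ z * star (B r j)) * (star (ψ z) * B r k) := by
    rw [hentry j k, Finset.mul_sum]
    exact Finset.sum_congr rfl fun r _ => by ring
  rw [step1]
  have step2 : ∑ r, (ψ z * star (B r j)) * (star (ψ z) * B r k)
      = (ψ j * star (ψ k)) * ∑ r, star (B r z) * B r z := by
    rw [Finset.mul_sum]
    refine Finset.sum_congr rfl fun r _ => ?_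
    rw [keyL j r, keyR k r]
    ring
  rw [step2, ← hentry z z, hzz]
  simp only [outerProd, Matrix.of_apply]
  ring
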